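/- Let γ > 0, D > 0 and define β²(V) = (2λ_μ/(μ+1)²)·[V(3σ_μ² + V²)·erfc(−V/(σ_μ√2)) + 2(2σ_μ² + V²)·(σ_μ/√(2π))·exp(−V²/(2σ_μ²))] with λ_μ = (1/4)√(π(μ+1)γ/(2D)) and σ_μ = √((μ+1)Dγ). Then as μ → ∞, β²(V) + β²(−V) → 2γ²D uniformly for V in compact sets. -/

import Mathlib

open MeasureTheory Real Filter
open scoped Topology

/-- The complementary error function `erfc(z) = (2/√π) ∫_z^∞ exp(-s²) ds`. -/
noncomputable def erfc (z : ℝ) : ℝ :=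
  (2 / Real.sqrt Real.pi) * ∫ s in Set.Ioi z, Real.exp (-s ^ 2)

/-- The squared noise coefficient `β²(V)` from collisions on one side in the 1D MD
model [A], with `λ_μ = (1/4)√(π(μ+1)γ/(2D))` and `σ_μ = √((μ+1)Dγ)`. -/
noncomputable def betaSq (γ D μ V : ℝ) : ℝ :=
  (2 * ((1 / 4) * Real.sqrt (Real.pi * (μ + 1) * γ / (2 * D))) / (μ + 1) ^ 2) *
    (V * (3 * Real.sqrt ((μ + 1) * D * γ) ^ 2 + V ^ 2) *
        erfc (-V / (Real.sqrt ((μ + 1) * D * γ) * Real.sqrt 2)) +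
      2 * (2 * Real.sqrt ((μ + 1) * D * γ) ^ 2 + V ^ 2) *
        (Real.sqrt ((μ + 1) * D * γ) / Real.sqrt (2 * Real.pi)) *
        Real.exp (-V ^ 2 / (2 * Real.sqrt ((μ + 1) * D * γ) ^ 2)))


noncomputable def Jfun (x : ℝ) : ℝ := ∫ u in (-1:ℝ)..(1:ℝ), Real.exp (-(x * u) ^ 2)

@[continuity, fun_prop]
lemma Jfun_continuous : Continuous Jfun := by
  have hf : Continuous (Function.uncurry fun (x u : ℝ) => Real.exp (-(x * u) ^ 2)) := by
    fun_prop
  exact intervalIntegral.continuous_parametric_intervalIntegral_of_continuous' hf (-1) 1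

lemma gauss_integrable : Integrable (fun s : ℝ => Real.exp (-s ^ 2)) := by
  simpa using integrable_exp_neg_mul_sq (one_pos)

lemma smul_Jfun (z : ℝ) : z * Jfun z = ∫ s in (-z)..z, Real.exp (-s ^ 2) := by
  have := intervalIntegral.smul_integral_comp_mul_left (a := (-1:ℝ)) (b := (1:ℝ))
      (fun s => Real.exp (-s ^ 2)) z
  simpa [Jfun, smul_eq_mul] using this

lemma erfc_sub (z : ℝ) :
    erfc (-z) - erfc z = (2 / Real.sqrt Real.pi) * (z * Jfun z) := by
  have h1 := intervalIntegral.integral_Iic_add_Ioi (μ := volume) (b := -z)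
      gauss_integrable.integrableOn gauss_integrable.integrableOn
  have h2 := intervalIntegral.integral_Iic_add_Ioi (μ := volume) (b := z)
      gauss_integrable.integrableOn gauss_integrable.integrableOn
  have h3 := intervalIntegral.integral_Iic_sub_Iic (μ := volume) (a := -z) (b := z)
      gauss_integrable.integrableOn gauss_integrable.integrableOn
  have h4 := smul_Jfun z
  have key : (∫ s in Set.Ioi (-z), Real.exp (-s ^ 2)) - ∫ s in Set.Ioi z, Real.exp (-s ^ 2)
      = z * Jfun z := by linarith
  unfold erfc
  rw [← mul_sub, key]

noncomputable def Gfun (γ D e V : ℝ) : ℝ :=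
  (1 / 2) * Real.sqrt (Real.pi * γ / (2 * D)) *
    (V * (3 * (D * γ) + V ^ 2 * e ^ 2) * (2 / Real.sqrt Real.pi) *
        (V / Real.sqrt (2 * (D * γ))) * Jfun (V * e / Real.sqrt (2 * (D * γ))) * e ^ 2 +
      4 * (2 * (D * γ) + V ^ 2 * e ^ 2) * (Real.sqrt (D * γ) / Real.sqrt (2 * Real.pi)) *
        Real.exp (-(V * e / Real.sqrt (2 * (D * γ))) ^ 2))

lemma Gfun_continuous (γ D : ℝ) : Continuous (Function.uncurry (Gfun γ D)) := by
  unfold Gfun Function.uncurry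
  fun_prop

lemma Gfun_zero (γ D : ℝ) (hγ : 0 < γ) (hD : 0 < D) (V : ℝ) :
    Gfun γ D 0 V = 2 * γ ^ 2 * D := by
  have hπ : (0:ℝ) < Real.pi := Real.pi_pos
  have h1 : Real.sqrt (Real.pi * γ / (2 * D))
      = Real.sqrt Real.pi * Real.sqrt γ / (Real.sqrt 2 * Real.sqrt D) := by
    rw [Real.sqrt_div (by positivity), Real.sqrt_mul hπ.le,
      Real.sqrt_mul (by norm_num : (0:ℝ) ≤ 2)]
  have h2 : Real.sqrt (D * γ) = Real.sqrt D * Real.sqrt γ := Real.sqrt_mul hD.le γ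
  have h3 : Real.sqrt (2 * Real.pi) = Real.sqrt 2 * Real.sqrt Real.pi :=
    Real.sqrt_mul (by norm_num) _
  have sγ := Real.mul_self_sqrt hγ.le
  have sD := Real.mul_self_sqrt hD.le
  have s2 : Real.sqrt 2 * Real.sqrt 2 = 2 := Real.mul_self_sqrt (by norm_num)
  have hπ0 : Real.sqrt Real.pi ≠ 0 := by positivity
  have h20 : Real.sqrt 2 ≠ 0 := by positivity
  have hD0 : Real.sqrt D ≠ 0 := by positivity
  simp only [Gfun, ne_eq, OfNat.ofNat_ne_zero, not_false_eq_true, zero_pow, mul_zero, zero_mul,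
    mul_zero, add_zero, zero_div, neg_zero, Real.exp_zero, mul_one, zero_add]
  rw [h1, h2, h3]
  field_simp
  ring_nf
  linear_combination 4 * sγ - 2 * γ * s2

lemma sum_eq (γ D : ℝ) (hγ : 0 < γ) (hD : 0 < D) (μ : ℝ) (hμ : 0 ≤ μ) (V : ℝ) :
    betaSq γ D μ V + betaSq γ D μ (-V) = Gfun γ D (1 / Real.sqrt (μ + 1)) V := by
  have ht : (0:ℝ) < μ + 1 := by linarith
  set U := Real.sqrt (μ + 1) with hUdef
  have hU0 : 0 < U := Real.sqrt_pos.2 ht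
  have hU2 : U ^ 2 = μ + 1 := Real.sq_sqrt ht.le
  have hDγ : (0:ℝ) < D * γ := by positivity
  have hW0 : 0 < Real.sqrt (2 * (D * γ)) := Real.sqrt_pos.2 (by positivity)
  have hS : Real.sqrt ((μ + 1) * D * γ) = U * Real.sqrt (D * γ) := by
    rw [mul_assoc]; exact Real.sqrt_mul ht.le _
  have hS2 : Real.sqrt ((μ + 1) * D * γ) ^ 2 = U ^ 2 * (D * γ) := by
    rw [mul_assoc, Real.sq_sqrt (by positivity), hU2]
  have hQ : Real.sqrt ((μ + 1) * D * γ) * Real.sqrt 2 = U * Real.sqrt (2 * (D * γ)) := by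
    rw [hS, Real.sqrt_mul (by norm_num : (0:ℝ) ≤ 2)]; ring
  have hP : Real.sqrt (Real.pi * (μ + 1) * γ / (2 * D))
      = U * Real.sqrt (Real.pi * γ / (2 * D)) := by
    rw [show Real.pi * (μ + 1) * γ / (2 * D) = (μ + 1) * (Real.pi * γ / (2 * D)) by ring,
      Real.sqrt_mul ht.le]
  have e1 : -V / (Real.sqrt ((μ + 1) * D * γ) * Real.sqrt 2)
      = -(V * (1 / U) / Real.sqrt (2 * (D * γ))) := by
    rw [hQ]; field_simp
  have e2 : -(-V) / (Real.sqrt ((μ + 1) * D * γ) * Real.sqrt 2)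
      = V * (1 / U) / Real.sqrt (2 * (D * γ)) := by
    rw [hQ]; field_simp
  have e3 : -V ^ 2 / (2 * Real.sqrt ((μ + 1) * D * γ) ^ 2)
      = -(V * (1 / U) / Real.sqrt (2 * (D * γ))) ^ 2 := by
    rw [hS2, div_pow, mul_pow, Real.sq_sqrt (by positivity : (0:ℝ) ≤ 2 * (D * γ))]
    field_simp
  have e3' : -(-V) ^ 2 / (2 * Real.sqrt ((μ + 1) * D * γ) ^ 2)
      = -(V * (1 / U) / Real.sqrt (2 * (D * γ))) ^ 2 := by rw [neg_sq]; exact e3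
  have herfc := erfc_sub (V * (1 / U) / Real.sqrt (2 * (D * γ)))
  unfold betaSq Gfun
  rw [e1, e2, e3, e3', hP, hS2, hS, neg_sq]
  rw [show erfc (-(V * (1 / U) / Real.sqrt (2 * (D * γ))))
      = erfc (V * (1 / U) / Real.sqrt (2 * (D * γ)))
        + (2 / Real.sqrt Real.pi) * ((V * (1 / U) / Real.sqrt (2 * (D * γ)))
          * Jfun (V * (1 / U) / Real.sqrt (2 * (D * γ)))) by linarith [herfc]]
  have hπ0 : Real.sqrt Real.pi ≠ 0 := by positivity
  have h2π0 : Real.sqrt (2 * Real.pi) ≠ 0 := by positivity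
  rw [← hU2]
  field_simp
  ring

/-- As `μ → ∞`, the total noise intensity `β²(V) + β²(-V)` converges to `2γ²D`
uniformly for `V` in compact sets. -/
theorem stmt_10 (γ D : ℝ) (hγ : 0 < γ) (hD : 0 < D) (K : Set ℝ) (hK : IsCompact K) :
    TendstoUniformlyOn (fun (μ : ℝ) (V : ℝ) => betaSq γ D μ V + betaSq γ D μ (-V))
      (fun _ => 2 * γ ^ 2 * D) atTop K := by
  have hC : Continuous (Function.uncurry (Gfun γ D)) := Gfun_continuous γ D
  have hUC : UniformContinuousOn (↿(Gfun γ D)) ((Set.Icc (0:ℝ) 1) ×ˢ K) :=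
    (isCompact_Icc.prod hK).uniformContinuousOn_of_continuous hC.continuousOn
  have htu : TendstoUniformlyOn (Gfun γ D) (Gfun γ D 0) (𝓝[Set.Icc (0:ℝ) 1] 0) K :=
    hUC.tendstoUniformlyOn (Set.mem_Icc.2 ⟨le_rfl, zero_le_one⟩)
  have hsq : Tendsto (fun μ : ℝ => Real.sqrt (μ + 1)) atTop atTop := by
    apply Filter.tendsto_atTop_atTop.2
    intro b
    refine ⟨b ^ 2, fun a ha => ?_⟩
    calc b ≤ |b| := le_abs_self b
      _ = Real.sqrt (b ^ 2) := (Real.sqrt_sq_eq_abs b).symm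
      _ ≤ Real.sqrt (a + 1) := Real.sqrt_le_sqrt (by linarith)
  have hmap : Tendsto (fun μ : ℝ => 1 / Real.sqrt (μ + 1)) atTop
      (𝓝[Set.Icc (0:ℝ) 1] 0) := by
    apply tendsto_nhdsWithin_of_tendsto_nhds_of_eventually_within
    · simpa [one_div, Function.comp_def] using tendsto_inv_atTop_zero.comp hsq
    · filter_upwards [eventually_ge_atTop (0:ℝ)] with μ hμ
      have h1 : (1:ℝ) ≤ Real.sqrt (μ + 1) := by
        nlinarith [Real.sq_sqrt (show (0:ℝ) ≤ μ + 1 by linarith),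
          Real.sqrt_nonneg (μ + 1)]
      exact ⟨by positivity, by rw [div_le_one (by linarith)]; exact h1⟩
  have h1 : TendstoUniformlyOn (fun μ V => Gfun γ D (1 / Real.sqrt (μ + 1)) V)
      (Gfun γ D 0) atTop K := fun u hu => hmap.eventually (htu u hu)
  refine (h1.congr ?_).congr_right ?_
  · filter_upwards [eventually_ge_atTop (0:ℝ)] with μ hμ
    intro V _
    exact (sum_eq γ D hγ hD μ hμ V).symm
  · intro V _
    exact Gfun_zero γ D hγ hD V
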